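/- Let μ be a Borel probability measure on ℝ^d absolutely continuous with respect to Lebesgue measure, let X_1,…,X_n be i.i.d. with law μ, let h_1,…,h_n be n distinct points of [0,1]^d, and let σ̂ be a measurable random permutation of {1,…,n} that is almost surely an optimal assignment of (X_1,…,X_n) to (h_1,…,h_n). Then σ̂ is independent of the order statistic of the sample: for every permutation σ_0 of {1,…,n} and every Borel set A ⊆ (ℝ^d)^n that is invariant under all coordinate permutations, P(σ̂ = σ_0 and (X_1,…,X_n) ∈ A) = P(σ̂ = σ_0) · P((X_1,…,X_n) ∈ A). -/

import Mathlib

open MeasureTheory ProbabilityTheory Filter Topology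
open scoped ENNReal NNReal

noncomputable section

/-- `Euc d` is the Euclidean space `ℝ^d` with its Euclidean norm. -/
abbrev Euc (d : ℕ) : Type := EuclideanSpace ℝ (Fin d)

/-- The unit cube `[0,1]^d`. -/
def unitCube (d : ℕ) : Set (Euc d) := {x | ∀ i, x i ∈ Set.Icc (0 : ℝ) 1}

/-- A permutation `σ` is an optimal assignment of the points `x` to the points `h` if it
minimizes `σ ↦ ∑ i ‖x i − h (σ i)‖²` over all permutations. -/
def IsOptAssign {d n : ℕ} (x h : Fin n → Euc d) (σ : Equiv.Perm (Fin n)) : Prop :=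
  ∀ τ : Equiv.Perm (Fin n), ∑ i, ‖x i - h (σ i)‖ ^ 2 ≤ ∑ i, ‖x i - h (τ i)‖ ^ 2

namespace OptAux

variable {d n : ℕ}

/-- The assignment cost. -/
def S (h x : Fin n → Euc d) (σ : Equiv.Perm (Fin n)) : ℝ := ∑ i, ‖x i - h (σ i)‖ ^ 2

lemma measurable_S (h : Fin n → Euc d) (σ : Equiv.Perm (Fin n)) :
    Measurable fun x : Fin n → Euc d => S h x σ :=
  Finset.measurable_sum _ fun i _ =>
    ((measurable_pi_apply i).sub measurable_const).norm.pow_const 2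

lemma S_comp (h x : Fin n → Euc d) (σ τ : Equiv.Perm (Fin n)) :
    S h (fun i => x (τ i)) σ = S h x (σ * τ⁻¹) := by
  simp only [S]
  rw [← Equiv.sum_comp τ (fun j => ‖x j - h ((σ * τ⁻¹) j)‖ ^ 2)]
  exact Finset.sum_congr rfl fun i _ => by simp [Equiv.Perm.mul_apply]

lemma isOpt_iff (x h : Fin n → Euc d) (σ : Equiv.Perm (Fin n)) :
    IsOptAssign x h σ ↔ ∀ τ, S h x σ ≤ S h x τ := Iff.rfl

lemma opt_comp (x h : Fin n → Euc d) (σ τ : Equiv.Perm (Fin n)) :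
    IsOptAssign (fun i => x (τ i)) h σ ↔ IsOptAssign x h (σ * τ⁻¹) := by
  simp only [isOpt_iff]
  constructor
  · intro H ρ
    have h1 := H (ρ * τ)
    rw [S_comp, S_comp] at h1
    simpa [mul_assoc] using h1
  · intro H ρ
    rw [S_comp, S_comp]
    exact H _

/-- The set of samples for which `σ` is optimal. -/
def Bset (h : Fin n → Euc d) (σ : Equiv.Perm (Fin n)) : Set (Fin n → Euc d) :=
  {x | IsOptAssign x h σ}

/-- The set of samples with no ties among assignment costs. -/
def Tset (h : Fin n → Euc d) : Set (Fin n → Euc d) :=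
  {x | ∀ σ τ : Equiv.Perm (Fin n), σ ≠ τ → S h x σ ≠ S h x τ}

lemma measurable_Bset (h : Fin n → Euc d) (σ : Equiv.Perm (Fin n)) :
    MeasurableSet (Bset h σ) := by
  have : Bset h σ = ⋂ τ, {x | S h x σ ≤ S h x τ} := by
    ext x
    simp only [Bset, Set.mem_setOf_eq, Set.mem_iInter, isOpt_iff]
  rw [this]
  exact MeasurableSet.iInter fun τ => measurableSet_le (measurable_S h σ) (measurable_S h τ)

lemma measurable_Tset (h : Fin n → Euc d) : MeasurableSet (Tset h) := by
  have : Tset h = ⋂ σ, ⋂ τ, {x | σ ≠ τ → S h x σ ≠ S h x τ} := by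
    ext x; simp only [Tset, Set.mem_setOf_eq, Set.mem_iInter]
  rw [this]
  refine MeasurableSet.iInter fun σ => MeasurableSet.iInter fun τ => ?_
  by_cases hστ : σ = τ
  · simp [hστ]
  · have : {x : Fin n → Euc d | σ ≠ τ → S h x σ ≠ S h x τ}
        = {x | S h x σ = S h x τ}ᶜ := by
      ext x; simp [hστ]
    rw [this]
    exact (measurableSet_eq_fun (measurable_S h σ) (measurable_S h τ)).compl

lemma exists_opt (x h : Fin n → Euc d) : ∃ σ, IsOptAssign x h σ := by
  obtain ⟨σ, -, hσ⟩ := Finset.exists_min_image (Finset.univ : Finset (Equiv.Perm (Fin n)))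
    (fun σ => S h x σ) ⟨1, Finset.mem_univ 1⟩
  exact ⟨σ, fun τ => hσ τ (Finset.mem_univ τ)⟩

lemma unique_on_T {h : Fin n → Euc d} {x : Fin n → Euc d} (hx : x ∈ Tset h)
    {σ τ : Equiv.Perm (Fin n)} (hσ : IsOptAssign x h σ) (hτ : IsOptAssign x h τ) : σ = τ := by
  by_contra hne
  exact hx σ τ hne (le_antisymm (hσ τ) (hτ σ))

lemma T_comp (h x : Fin n → Euc d) (τ : Equiv.Perm (Fin n)) :
    (fun i => x (τ i)) ∈ Tset h ↔ x ∈ Tset h := by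
  constructor
  · intro H σ' τ' hne
    have h1 := H (σ' * τ) (τ' * τ) (fun e => hne (mul_right_cancel e))
    rw [S_comp, S_comp] at h1
    simpa [mul_assoc] using h1
  · intro H σ' τ' hne
    rw [S_comp, S_comp]
    exact H _ _ (fun e => hne (mul_right_cancel e))

/-- Absolute continuity of finite products of measures. -/
lemma pi_ac {α : Type*} [MeasurableSpace α] (n : ℕ) (μ ν : Measure α)
    [SigmaFinite μ] [SigmaFinite ν] (hac : μ ≪ ν) :
    Measure.pi (fun _ : Fin n => μ) ≪ Measure.pi (fun _ : Fin n => ν) := by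
  induction n with
  | zero =>
      rw [Measure.pi_of_empty, Measure.pi_of_empty]
  | succ n ih =>
      have h1 := MeasurePreserving.symm _
        (measurePreserving_piFinSuccAbove (fun _ : Fin (n + 1) => μ) 0)
      have h2 := MeasurePreserving.symm _
        (measurePreserving_piFinSuccAbove (fun _ : Fin (n + 1) => ν) 0)
      rw [← h1.map_eq, ← h2.map_eq]
      exact (hac.prod ih).map (MeasurableEquiv.measurable _)

/-- A tie between two distinct permutations is a null event. -/
lemma tie_null (μ : Measure (Euc d)) [IsProbabilityMeasure μ] (hac : μ ≪ volume)
    (h : Fin n → Euc d) (hinj : Function.Injective h)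
    (σ τ : Equiv.Perm (Fin n)) (hne : σ ≠ τ) :
    Measure.pi (fun _ : Fin n => μ) {x | S h x σ = S h x τ} = 0 := by
  classical
  set c : Fin n → Euc d := fun i => h (σ i) - h (τ i) with hc
  let L : (Fin n → Euc d) →ₗ[ℝ] ℝ :=
    { toFun := fun x => ∑ i, inner ℝ (x i) (c i)
      map_add' := fun x y => by simp [inner_add_left, Finset.sum_add_distrib]
      map_smul' := fun r x => by simp [inner_smul_left, Finset.mul_sum] }
  have hLapp : ∀ y : Fin n → Euc d, L y = ∑ i, (inner ℝ (y i) (c i) : ℝ) := fun _ => rfl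
  have key : ∀ ρ : Equiv.Perm (Fin n), ∀ x : Fin n → Euc d,
      S h x ρ = (∑ i, ‖x i‖ ^ 2) - 2 * (∑ i, (inner ℝ (x i) (h (ρ i)) : ℝ)) + ∑ i, ‖h i‖ ^ 2 := by
    intro ρ x
    calc S h x ρ = ∑ i, (‖x i‖ ^ 2 - 2 * (inner ℝ (x i) (h (ρ i)) : ℝ) + ‖h (ρ i)‖ ^ 2) :=
          Finset.sum_congr rfl fun i _ => norm_sub_sq_real _ _
      _ = _ := by
          rw [Finset.sum_add_distrib, Finset.sum_sub_distrib, ← Finset.mul_sum,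
            Equiv.sum_comp ρ (fun j => ‖h j‖ ^ 2)]
  have hsub : {x : Fin n → Euc d | S h x σ = S h x τ} ⊆ (LinearMap.ker L : Set _) := by
    intro x hx
    have hx' : S h x σ = S h x τ := hx
    rw [key σ x, key τ x] at hx'
    have heq : (∑ i, (inner ℝ (x i) (h (σ i)) : ℝ)) = ∑ i, (inner ℝ (x i) (h (τ i)) : ℝ) := by
      linarith
    have hL : L x = 0 := by
      rw [hLapp]
      have hsplit : ∀ i, (inner ℝ (x i) (c i) : ℝ)
          = (inner ℝ (x i) (h (σ i)) : ℝ) - (inner ℝ (x i) (h (τ i)) : ℝ) := fun i => by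
        simp [hc, inner_sub_right]
      rw [Finset.sum_congr rfl fun i _ => hsplit i, Finset.sum_sub_distrib, heq, sub_self]
    exact LinearMap.mem_ker.2 hL
  have hker : LinearMap.ker L ≠ ⊤ := by
    obtain ⟨i₀, hi₀⟩ : ∃ i, σ i ≠ τ i := by
      by_contra hforall
      push_neg at hforall
      exact hne (Equiv.ext hforall)
    have hc0 : c i₀ ≠ 0 := sub_ne_zero.2 fun e => hi₀ (hinj e)
    intro htop
    have hmem : Pi.single i₀ (c i₀) ∈ LinearMap.ker L := htop ▸ Submodule.mem_top
    have hLx : L (Pi.single i₀ (c i₀)) = (inner ℝ (c i₀) (c i₀) : ℝ) := by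
      rw [hLapp, Finset.sum_eq_single i₀]
      · simp
      · intro b _ hb
        rw [Pi.single_eq_of_ne hb]
        simp
      · intro hb; exact absurd (Finset.mem_univ i₀) hb
    rw [LinearMap.mem_ker.1 hmem] at hLx
    exact inner_self_ne_zero.2 hc0 hLx.symm
  haveI : (volume : Measure (Fin n → Euc d)).IsAddHaarMeasure := ⟨⟩
  have hvol : (volume : Measure (Fin n → Euc d)) (LinearMap.ker L : Set _) = 0 :=
    Measure.addHaar_submodule volume (LinearMap.ker L) hker
  have hACv : Measure.pi (fun _ : Fin n => μ) ≪ (volume : Measure (Fin n → Euc d)) := by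
    have hpi := pi_ac n μ volume hac
    rwa [← volume_pi] at hpi
  exact measure_mono_null hsub (hACv hvol)

end OptAux

open OptAux

/-- Under the hypotheses of Statement 1, the optimal-assignment permutation `σ̂` is independent
of the order statistic of the sample: for every permutation `σ₀` and every Borel set
`A ⊆ (ℝ^d)^n` invariant under all coordinate permutations, the events `{σ̂ = σ₀}` and
`{(X_1,…,X_n) ∈ A}` are independent. -/
theorem stmt2
    {d n : ℕ} {Ω : Type*} [MeasurableSpace Ω] (P : Measure Ω) [IsProbabilityMeasure P]
    (μ : Measure (Euc d)) [IsProbabilityMeasure μ] (hac : μ ≪ volume)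
    (X : Fin n → Ω → Euc d) (hXmeas : ∀ i, Measurable (X i))
    (hindep : iIndepFun X P)
    (hlaw : ∀ i, Measure.map (X i) P = μ)
    (h : Fin n → Euc d) (hcube : ∀ i, h i ∈ unitCube d) (hinj : Function.Injective h)
    (σhat : Ω → Equiv.Perm (Fin n))
    (hσmeas : ∀ σ₀ : Equiv.Perm (Fin n), MeasurableSet {ω | σhat ω = σ₀})
    (hopt : ∀ᵐ ω ∂P, IsOptAssign (fun i => X i ω) h (σhat ω)) :
    ∀ σ₀ : Equiv.Perm (Fin n), ∀ A : Set (Fin n → Euc d), MeasurableSet A →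
      (∀ (τ : Equiv.Perm (Fin n)) (x : Fin n → Euc d), x ∈ A → (fun i => x (τ i)) ∈ A) →
      P ({ω | σhat ω = σ₀} ∩ {ω | (fun i => X i ω) ∈ A})
        = P {ω | σhat ω = σ₀} * P {ω | (fun i => X i ω) ∈ A} := by
  intro σ₀ A hA hAinv
  classical
  set Y : Ω → (Fin n → Euc d) := fun ω i => X i ω with hYdef
  have hYmeas : Measurable Y := measurable_pi_iff.2 hXmeas
  set ν : Measure (Fin n → Euc d) := Measure.pi (fun _ : Fin n => μ) with hνdef
  haveI : IsProbabilityMeasure ν := by rw [hνdef]; infer_instance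
  -- joint law
  have hν : Measure.map Y P = ν := by
    rw [hνdef]
    refine (Measure.pi_eq fun s hs => ?_).symm
    rw [Measure.map_apply hYmeas (MeasurableSet.univ_pi hs)]
    have hpre : Y ⁻¹' Set.pi Set.univ s = ⋂ i ∈ Finset.univ, X i ⁻¹' s i := by
      ext ω; simp [Set.mem_pi, hYdef]
    rw [hpre, (iIndepFun_iff_measure_inter_preimage_eq_mul.1 hindep) Finset.univ
      (fun i _ => hs i)]
    exact Finset.prod_congr rfl fun i _ => by
      rw [← hlaw i, Measure.map_apply (hXmeas i) (hs i)]
  have key : ∀ S : Set (Fin n → Euc d), MeasurableSet S → P (Y ⁻¹' S) = ν S := by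
    intro S hS
    rw [← hν, Measure.map_apply hYmeas hS]
  have hTm : MeasurableSet (Tset h) := measurable_Tset h
  have hBm : ∀ σ : Equiv.Perm (Fin n), MeasurableSet (Bset h σ) := measurable_Bset h
  -- ties are null
  have hTnull : ν (Tset h)ᶜ = 0 := by
    have hsub : (Tset h)ᶜ ⊆ ⋃ σ : Equiv.Perm (Fin n), ⋃ τ : Equiv.Perm (Fin n),
        {x | σ ≠ τ ∧ S h x σ = S h x τ} := by
      intro x hx
      simp only [Tset, Set.mem_compl_iff, Set.mem_setOf_eq] at hx
      push_neg at hx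
      obtain ⟨σ, τ, h1, h2⟩ := hx
      exact Set.mem_iUnion.2 ⟨σ, Set.mem_iUnion.2 ⟨τ, h1, h2⟩⟩
    refine measure_mono_null hsub ?_
    refine measure_iUnion_null fun σ => measure_iUnion_null fun τ => ?_
    by_cases hστ : σ = τ
    · have hempty : {x : Fin n → Euc d | σ ≠ τ ∧ S h x σ = S h x τ} = ∅ := by
        ext x; simp [hστ]
      simp [hempty]
    · rw [hνdef]
      exact measure_mono_null (fun x hx => hx.2) (tie_null μ hac h hinj σ τ hστ)
  have haeT : ∀ᵐ ω ∂P, Y ω ∈ Tset h := by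
    rw [ae_iff]
    have hset : {ω | ¬ Y ω ∈ Tset h} = Y ⁻¹' (Tset h)ᶜ := rfl
    rw [hset, key _ hTm.compl]
    exact hTnull
  -- the event {σhat = σ₀} is a.e. equal to a pullback event
  have haeEq : {ω | σhat ω = σ₀} =ᵐ[P] Y ⁻¹' (Bset h σ₀ ∩ Tset h) := by
    refine eventuallyEq_set.2 ?_
    filter_upwards [hopt, haeT] with ω h1 h2
    constructor
    · intro hσ
      refine ⟨?_, h2⟩
      show IsOptAssign (Y ω) h σ₀
      rw [← hσ]
      exact h1
    · rintro ⟨hb, ht⟩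
      exact unique_on_T ht h1 hb
  -- measure-preserving coordinate permutations
  have hg : ∀ τ : Equiv.Perm (Fin n),
      MeasurePreserving (fun x : Fin n → Euc d => fun i => x (τ i)) ν ν := by
    intro τ
    have hmp := MeasurePreserving.symm _
      (measurePreserving_piCongrLeft (fun _ : Fin n => μ) τ)
    have heq : ⇑(MeasurableEquiv.piCongrLeft (fun _ : Fin n => Euc d) τ).symm
        = fun x : Fin n → Euc d => fun i => x (τ i) := by
      funext x i
      simp [MeasurableEquiv.piCongrLeft, Equiv.piCongrLeft_symm_apply]
    rw [hνdef]
    rwa [heq] at hmp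
  -- preimage computation
  have hpre : ∀ (σ τ : Equiv.Perm (Fin n)) (A' : Set (Fin n → Euc d)),
      (∀ (ρ : Equiv.Perm (Fin n)) (x : Fin n → Euc d), x ∈ A' → (fun i => x (ρ i)) ∈ A') →
      (fun x : Fin n → Euc d => fun i => x (τ i)) ⁻¹' ((Bset h σ ∩ Tset h) ∩ A')
        = (Bset h (σ * τ⁻¹) ∩ Tset h) ∩ A' := by
    intro σ τ A' hA'inv
    ext x
    simp only [Set.mem_preimage, Set.mem_inter_iff]
    have hB : (fun i => x (τ i)) ∈ Bset h σ ↔ x ∈ Bset h (σ * τ⁻¹) := opt_comp x h σ τ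
    have hT : (fun i => x (τ i)) ∈ Tset h ↔ x ∈ Tset h := T_comp h x τ
    have hA' : (fun i => x (τ i)) ∈ A' ↔ x ∈ A' := by
      constructor
      · intro hx
        have hxx := hA'inv τ⁻¹ _ hx
        simpa using hxx
      · exact fun hx => hA'inv τ x hx
    rw [hB, hT, hA']
  -- the master counting identity
  have master : ∀ (A' : Set (Fin n → Euc d)), MeasurableSet A' →
      (∀ (ρ : Equiv.Perm (Fin n)) (x : Fin n → Euc d), x ∈ A' → (fun i => x (ρ i)) ∈ A') →
      (Fintype.card (Equiv.Perm (Fin n)) : ℝ≥0∞) * ν ((Bset h σ₀ ∩ Tset h) ∩ A') = ν A' := by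
    intro A' hA' hA'inv
    set c : Equiv.Perm (Fin n) → ℝ≥0∞ := fun σ => ν ((Bset h σ ∩ Tset h) ∩ A') with hcdef
    have hconst : ∀ σ : Equiv.Perm (Fin n), c σ = c σ₀ := by
      intro σ
      have hmeas := (hg (σ₀⁻¹ * σ)).measure_preimage
        (((hBm σ).inter hTm).inter hA').nullMeasurableSet
      rw [hpre σ (σ₀⁻¹ * σ) A' hA'inv] at hmeas
      have hperm : σ * (σ₀⁻¹ * σ)⁻¹ = σ₀ := by group
      rw [hperm] at hmeas
      exact hmeas.symm
    have hdisj : Pairwise (Function.onFun Disjoint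
        fun σ : Equiv.Perm (Fin n) => (Bset h σ ∩ Tset h) ∩ A') := by
      intro σ τ hστ
      refine Set.disjoint_left.2 fun x hx1 hx2 => ?_
      exact hστ (unique_on_T hx1.1.2 hx1.1.1 hx2.1.1)
    have hcover : (⋃ σ : Equiv.Perm (Fin n), ((Bset h σ ∩ Tset h) ∩ A')) = Tset h ∩ A' := by
      ext x
      simp only [Set.mem_iUnion, Set.mem_inter_iff]
      constructor
      · rintro ⟨σ, ⟨-, ht⟩, ha⟩; exact ⟨ht, ha⟩
      · rintro ⟨ht, ha⟩
        obtain ⟨σ, hσ⟩ := exists_opt x h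
        exact ⟨σ, ⟨hσ, ht⟩, ha⟩
    have hTA : ν (Tset h ∩ A') = ν A' := by
      have h1 : ν A' = ν (A' ∩ Tset h) + ν (A' \ Tset h) := (measure_inter_add_diff A' hTm).symm
      have h2 : ν (A' \ Tset h) = 0 := measure_mono_null (fun x hx => hx.2) hTnull
      rw [h2, add_zero] at h1
      rw [Set.inter_comm]
      exact h1.symm
    have hsum : ν A' = ∑ σ : Equiv.Perm (Fin n), c σ := by
      rw [← hTA, ← hcover,
        measure_iUnion hdisj (fun σ => ((hBm σ).inter hTm).inter hA'), tsum_fintype]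
    calc (Fintype.card (Equiv.Perm (Fin n)) : ℝ≥0∞) * c σ₀
        = ∑ _σ : Equiv.Perm (Fin n), c σ₀ := by
          rw [Finset.sum_const, Finset.card_univ, nsmul_eq_mul]
      _ = ∑ σ : Equiv.Perm (Fin n), c σ := Finset.sum_congr rfl fun σ _ => (hconst σ).symm
      _ = ν A' := hsum.symm
  -- put everything together
  have e1 := master A hA hAinv
  have e2 := master Set.univ MeasurableSet.univ (fun ρ x _ => Set.mem_univ _)
  rw [Set.inter_univ, measure_univ] at e2
  have hP1 : P ({ω | σhat ω = σ₀} ∩ {ω | (fun i => X i ω) ∈ A})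
      = ν ((Bset h σ₀ ∩ Tset h) ∩ A) := by
    have hYA : {ω | (fun i => X i ω) ∈ A} = Y ⁻¹' A := rfl
    have h1 := Filter.EventuallyEq.inter (l := MeasureTheory.ae P)
      (s' := Y ⁻¹' A) (t' := Y ⁻¹' A) haeEq Filter.EventuallyEq.rfl
    rw [hYA, measure_congr h1, ← Set.preimage_inter, key _ (((hBm σ₀).inter hTm).inter hA)]
  have hP2 : P {ω | σhat ω = σ₀} = ν (Bset h σ₀ ∩ Tset h) := by
    rw [measure_congr haeEq, key _ ((hBm σ₀).inter hTm)]
  have hP3 : P {ω | (fun i => X i ω) ∈ A} = ν A := key A hA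
  rw [hP1, hP2, hP3]
  calc ν ((Bset h σ₀ ∩ Tset h) ∩ A)
      = 1 * ν ((Bset h σ₀ ∩ Tset h) ∩ A) := (one_mul _).symm
    _ = ((Fintype.card (Equiv.Perm (Fin n)) : ℝ≥0∞) * ν (Bset h σ₀ ∩ Tset h))
          * ν ((Bset h σ₀ ∩ Tset h) ∩ A) := by rw [e2]
    _ = ν (Bset h σ₀ ∩ Tset h)
          * ((Fintype.card (Equiv.Perm (Fin n)) : ℝ≥0∞) * ν ((Bset h σ₀ ∩ Tset h) ∩ A)) := by
        ring
    _ = ν (Bset h σ₀ ∩ Tset h) * ν A := by rw [e1]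

end
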